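/- For K-vector subspaces U, W ⊆ Kⁿ of the same dimension, res(U) = res(W) if and only if for every u ∈ U there exists w ∈ W with rv(u) = rv(w). -/

import Mathlib

noncomputable section

open scoped Classical Pointwise

section Preamble

variable {K : Type*} [Field K] {Γ : Type*} [LinearOrderedCommGroupWithZero Γ]

instance (priority := 100) : OrderBot Γ where
  bot := 0
  bot_le _ := zero_le'

/-- The max-valuation on `K^n`: `v(a) = maxᵢ v(aᵢ)`. -/
def vv (v : Valuation K Γ) {n : ℕ} (x : Fin n → K) : Γ :=
  Finset.univ.sup fun i => v (x i)

/-- `rvEq v x y` expresses `rv(x) = rv(y)` in `RV⁽ⁿ⁾ = Kⁿ/∼`, where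
`x ∼ y` iff `v(x−y) < v(x)` or `x = y = 0`. -/
def rvEq (v : Valuation K Γ) {n : ℕ} (x y : Fin n → K) : Prop :=
  vv v (x - y) < vv v x ∨ (x = 0 ∧ y = 0)

/-- Balls in `K` (with `K` itself counting as a ball). -/
def IsBall1 (v : Valuation K Γ) (B : Set K) : Prop :=
  B = Set.univ ∨ ∃ a : K, ∃ γ : Γ, γ ≠ 0 ∧
    (B = {x | v (x - a) < γ} ∨ B = {x | v (x - a) ≤ γ})

/-- Balls in `Kⁿ` (with `Kⁿ` itself counting as a ball). -/
def IsBall (v : Valuation K Γ) {n : ℕ} (B : Set (Fin n → K)) : Prop :=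
  B = Set.univ ∨ ∃ a : Fin n → K, ∃ γ : Γ, γ ≠ 0 ∧
    (B = {x | vv v (x - a) < γ} ∨ B = {x | vv v (x - a) ≤ γ})

/-- Spherical completeness: every nonempty chain of balls in `K` has nonempty
intersection. -/
def SphericallyComplete (v : Valuation K Γ) : Prop :=
  ∀ C : Set (Set K), C.Nonempty → (∀ B ∈ C, IsBall1 v B) → IsChain (· ⊆ ·) C →
    (⋂ B ∈ C, B).Nonempty

/-- The residue field `K̄` of the valuation ring `𝒪 = {x | v x ≤ 1}`. -/
def Kbar (v : Valuation K Γ) : Type _ :=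
  IsLocalRing.ResidueField v.valuationSubring

instance (v : Valuation K Γ) : Field (Kbar v) :=
  inferInstanceAs (Field (IsLocalRing.ResidueField v.valuationSubring))

/-- The residue map `res : 𝒪 → K̄`, extended by the junk value `0` outside `𝒪`. -/
def res' (v : Valuation K Γ) (x : K) : Kbar v :=
  if h : v x ≤ 1 then IsLocalRing.residue v.valuationSubring ⟨x, h⟩ else 0

/-- The coordinatewise residue map on `Kⁿ`. -/
def resv (v : Valuation K Γ) {n : ℕ} (x : Fin n → K) : Fin n → Kbar v :=
  fun i => res' v (x i)

/-- `res(S)` for a set `S ⊆ Kⁿ`: the set of residues of points of `S ∩ 𝒪ⁿ`. -/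
def resSet (v : Valuation K Γ) {n : ℕ} (S : Set (Fin n → K)) : Set (Fin n → Kbar v) :=
  resv v '' {x ∈ S | ∀ i, v (x i) ≤ 1}

/-- `dir(x) = res(K·x) ⊆ K̄ⁿ`. -/
def dirSet (v : Valuation K Γ) {n : ℕ} (x : Fin n → K) : Set (Fin n → Kbar v) :=
  resSet v {y | ∃ c : K, y = c • x}

/-- The coordinate projection `Kⁿ → K^d` selecting the coordinates `σ 0 < σ 1 < ⋯`. -/
def proj {A : Type*} {n d : ℕ} (σ : Fin d → Fin n) (x : Fin n → A) : Fin d → A :=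
  fun k => x (σ k)

/-- `σ` (a strictly increasing selection of `d` of the `n` coordinates) is an
exhibition of the `K̄`-subspace `Ū ⊆ K̄ⁿ` if the corresponding coordinate projection
`K̄ⁿ → K̄^d` restricts to an isomorphism from `Ū` onto `K̄^d`. -/
def IsExhibition (v : Valuation K Γ) {n d : ℕ} (σ : Fin d → Fin n)
    (Ubar : Submodule (Kbar v) (Fin n → Kbar v)) : Prop :=
  StrictMono σ ∧ Set.BijOn (proj σ) (Ubar : Set (Fin n → Kbar v)) Set.univ

/-- `affdir(C)`: the `K̄`-subspace of `K̄ⁿ` generated by all `dir(x − x')`, `x, x' ∈ C`. -/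
def affdir (v : Valuation K Γ) {n : ℕ} (C : Set (Fin n → K)) :
    Submodule (Kbar v) (Fin n → Kbar v) :=
  Submodule.span (Kbar v) (⋃ x ∈ C, ⋃ x' ∈ C, dirSet v (x - x'))

/-- A matrix has entries in the valuation ring `𝒪`. -/
def EntriesInO (v : Valuation K Γ) {n : ℕ} (M : Matrix (Fin n) (Fin n) K) : Prop :=
  ∀ i j, v (M i j) ≤ 1

/-- `M ∈ GLₙ(𝒪)`: `M` is invertible, with entries in `𝒪`, and its inverse also has
entries in `𝒪`. -/
def MemGLO (v : Valuation K Γ) {n : ℕ} (M : Matrix (Fin n) (Fin n) K) : Prop :=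
  EntriesInO v M ∧ ∃ N : Matrix (Fin n) (Fin n) K,
    M * N = 1 ∧ N * M = 1 ∧ EntriesInO v N

/-- The entrywise residue matrix of `M`. -/
def resM (v : Valuation K Γ) {n : ℕ} (M : Matrix (Fin n) (Fin n) K) :
    Matrix (Fin n) (Fin n) (Kbar v) :=
  fun i j => res' v (M i j)

/-- `DeltaLE v U W γ` expresses `Δ(U, W) ≤ γ`: for every `u ∈ U` there is `w ∈ W`
with `v(u − w) ≤ v(u)·γ`. -/
def DeltaLE (v : Valuation K Γ) {n : ℕ} (U W : Submodule K (Fin n → K)) (γ : Γ) : Prop :=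
  ∀ u ∈ U, ∃ w ∈ W, vv v (u - w) ≤ vv v u * γ

/-- `IsDelta v U W γ` expresses `Δ(U, W) = γ`: `γ` is the minimum of all admissible
bounds. -/
def IsDelta (v : Valuation K Γ) {n : ℕ} (U W : Submodule K (Fin n → K)) (γ : Γ) : Prop :=
  DeltaLE v U W γ ∧ ∀ δ : Γ, DeltaLE v U W δ → γ ≤ δ

end Preamble

variable {K : Type*} [Field K] {Γ : Type*} [LinearOrderedCommGroupWithZero Γ]

section AuxLemmas

variable {K : Type*} [Field K] {Γ : Type*} [LinearOrderedCommGroupWithZero Γ]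
variable (v : Valuation K Γ) {n : ℕ}

lemma aux_vv_le_iff {x : Fin n → K} {γ : Γ} : vv v x ≤ γ ↔ ∀ i, v (x i) ≤ γ := by
  simp [vv, Finset.sup_le_iff]

lemma aux_coord_le_vv (x : Fin n → K) (i : Fin n) : v (x i) ≤ vv v x :=
  by exact Finset.le_sup (f := fun j => v (x j)) (Finset.mem_univ i)

lemma aux_vv_zero : vv v (0 : Fin n → K) = 0 := by
  refine le_antisymm ?_ zero_le'
  exact (aux_vv_le_iff v).2 fun i => by simp

lemma aux_vv_eq_zero_iff {x : Fin n → K} : vv v x = 0 ↔ x = 0 := by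
  constructor
  · intro h
    funext i
    have := aux_coord_le_vv v x i
    rw [h, le_zero_iff] at this
    simpa using this
  · rintro rfl; exact aux_vv_zero v

lemma aux_vv_smul_le (c : K) (x : Fin n → K) : vv v (c • x) ≤ v c * vv v x :=
  (aux_vv_le_iff v).2 fun i => by
    simpa [map_mul] using mul_le_mul_right (aux_coord_le_vv v x i) (v c)

lemma aux_vv_smul (c : K) (x : Fin n → K) : vv v (c • x) = v c * vv v x := by
  rcases eq_or_ne c 0 with rfl | hc
  · simp [aux_vv_zero]
  · refine le_antisymm (aux_vv_smul_le v c x) ?_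
    have h2 := aux_vv_smul_le v c⁻¹ (c • x)
    rw [inv_smul_smul₀ hc, map_inv₀] at h2
    calc v c * vv v x ≤ v c * ((v c)⁻¹ * vv v (c • x)) := mul_le_mul_right h2 _
      _ = vv v (c • x) := by
        rw [← mul_assoc, mul_inv_cancel₀ (by simpa using hc), one_mul]

lemma aux_vv_sub_le (x y : Fin n → K) :
    vv v (x - y) ≤ max (vv v x) (vv v y) :=
  (aux_vv_le_iff v).2 fun i => by
    calc v ((x - y) i) = v (x i - y i) := by simp
      _ ≤ max (v (x i)) (v (y i)) := v.map_sub _ _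
      _ ≤ max (vv v x) (vv v y) :=
          max_le_max (aux_coord_le_vv v x i) (aux_coord_le_vv v y i)

end AuxLemmas
section AuxRes

variable {K : Type*} [Field K] {Γ : Type*} [LinearOrderedCommGroupWithZero Γ]
variable (v : Valuation K Γ) {n : ℕ}

lemma aux_integers : v.Integers v.valuationSubring :=
  { hom_inj := Subtype.coe_injective
    map_le_one := fun r => r.2
    exists_of_le_one := fun r hr => ⟨⟨r, hr⟩, rfl⟩ }

lemma aux_mem_maximalIdeal {a : v.valuationSubring} :
    a ∈ IsLocalRing.maximalIdeal v.valuationSubring ↔ v (a : K) < 1 := by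
  rw [IsLocalRing.mem_maximalIdeal, mem_nonunits_iff,
    (aux_integers v).isUnit_iff_valuation_eq_one]
  constructor
  · intro h; exact lt_of_le_of_ne a.2 h
  · intro h; exact ne_of_lt h

lemma aux_res'_coe (a : v.valuationSubring) :
    res' v (a : K) = IsLocalRing.residue v.valuationSubring a := by
  exact dif_pos (show v (a : K) ≤ 1 from a.2)

lemma aux_res'_eq_iff {x y : K} (hx : v x ≤ 1) (hy : v y ≤ 1) :
    res' v x = res' v y ↔ v (x - y) < 1 := by
  rw [show res' v x = IsLocalRing.residue v.valuationSubring ⟨x, hx⟩ from dif_pos hx,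
    show res' v y = IsLocalRing.residue v.valuationSubring ⟨y, hy⟩ from dif_pos hy]
  have h := Ideal.Quotient.mk_eq_mk_iff_sub_mem
    (I := IsLocalRing.maximalIdeal v.valuationSubring)
    (⟨x, hx⟩ : v.valuationSubring) ⟨y, hy⟩
  rw [aux_mem_maximalIdeal] at h
  have hsub : (((⟨x, hx⟩ - ⟨y, hy⟩ : v.valuationSubring)) : K) = x - y := rfl
  rw [hsub] at h
  exact h

lemma aux_res'_sum_mul {d : ℕ} (c f : Fin d → K) (hc : ∀ k, v (c k) ≤ 1)
    (hf : ∀ k, v (f k) ≤ 1) :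
    res' v (∑ k, c k * f k) = ∑ k, res' v (c k) * res' v (f k) := by
  have h1 : (∑ k, c k * f k) =
      ((∑ k, (⟨c k, hc k⟩ * ⟨f k, hf k⟩ : v.valuationSubring) : v.valuationSubring) : K) := by
    push_cast; rfl
  rw [h1, aux_res'_coe, map_sum]
  refine Finset.sum_congr rfl fun k _ => ?_
  rw [map_mul, ← aux_res'_coe, ← aux_res'_coe]; rfl

lemma aux_resv_eq_iff {x y : Fin n → K} (hx : ∀ i, v (x i) ≤ 1) (hy : ∀ i, v (y i) ≤ 1) :
    resv v x = resv v y ↔ ∀ i, v (x i - y i) < 1 := by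
  constructor
  · intro h i
    have := congrFun h i
    exact (aux_res'_eq_iff v (hx i) (hy i)).1 this
  · intro h
    funext i
    exact (aux_res'_eq_iff v (hx i) (hy i)).2 (h i)

end AuxRes
section AuxBasis

open Matrix

variable {K : Type*} [Field K] {Γ : Type*} [LinearOrderedCommGroupWithZero Γ]

lemma aux_exists_good_basis (v : Valuation K Γ) {n : ℕ} (U : Submodule K (Fin n → K)) :
    ∃ (b : Fin (Module.finrank K U) → (Fin n → K)) (σ : Fin (Module.finrank K U) → Fin n),
      (∀ k, b k ∈ U) ∧
      (∀ x ∈ U, x = ∑ k, x (σ k) • b k) ∧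
      (∀ k i, v (b k i) ≤ 1) ∧
      (∀ k l, b k (σ l) = if k = l then 1 else 0) := by
  classical
  set d := Module.finrank K ↥U with hd
  let B := Module.finBasis K ↥U
  let u : Fin d → (Fin n → K) := fun k => ((B k : U) : Fin n → K)
  have huU : ∀ k, u k ∈ U := fun k => (B k).2
  have hu : LinearIndependent K u := B.linearIndependent.map' U.subtype U.ker_subtype
  have hspan : Submodule.span K (Set.range u) = U := by
    have h1 : Set.range u = U.subtype '' Set.range B := by
      rw [← Set.range_comp]; rfl
    rw [h1, ← Submodule.map_span, B.span_eq, Submodule.map_top, Submodule.range_subtype]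
  -- the minor matrices
  let M : (Fin d → Fin n) → Matrix (Fin d) (Fin d) K := fun τ => Matrix.of fun k l => u k (τ l)
  -- existence of a nonzero minor
  have hex : ∃ τ : Fin d → Fin n, (M τ).det ≠ 0 := by
    let A : Matrix (Fin d) (Fin n) K := Matrix.of u
    have hrank : A.rank = d := by
      have := hu.rank_matrix (M := A)
      simpa using this
    let c : Fin n → (Fin d → K) := fun j k => u k j
    have hspanc : Submodule.span K (Set.range c) = ⊤ := by
      apply Submodule.eq_top_of_finrank_eq
      have h2 : Set.range c = Set.range A.transpose.row := rfl
      rw [h2, ← Matrix.rank_eq_finrank_span_row, Matrix.rank_transpose, hrank,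
        Module.finrank_fin_fun]
    obtain ⟨t, hts, htspan, htind⟩ := exists_linearIndependent K (Set.range c)
    rw [hspanc] at htspan
    haveI : Fintype t := Set.Finite.fintype ((Set.finite_range c).subset hts)
    let Bt : Module.Basis t K (Fin d → K) := Module.Basis.mk htind (by rw [Subtype.range_coe]; exact htspan.ge)
    have hcard : Fintype.card t = d := by
      rw [← Module.finrank_eq_card_basis Bt, Module.finrank_fin_fun]
    let e : Fin d ≃ t := (Fintype.equivFinOfCardEq hcard).symm
    have hmem : ∀ y : t, (y : Fin d → K) ∈ Set.range c := fun y => hts y.2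
    let τ₀ : Fin d → Fin n := fun l => (hmem (e l)).choose
    have hτ₀ : ∀ l, c (τ₀ l) = ((e l : t) : Fin d → K) := fun l => (hmem (e l)).choose_spec
    refine ⟨τ₀, ?_⟩
    have hcols : LinearIndependent K fun l => (M τ₀).transpose l := by
      have h3 : (fun l => (M τ₀).transpose l) = fun l => ((e l : t) : Fin d → K) := by
        funext l
        rw [← hτ₀ l]
        rfl
      rw [h3]
      exact htind.comp e e.injective
    have := Matrix.linearIndependent_cols_iff_isUnit.mp hcols
    exact isUnit_iff_ne_zero.mp ((Matrix.isUnit_iff_isUnit_det _).mp this)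
  obtain ⟨τ₀, hτ₀⟩ := hex
  obtain ⟨σ, -, hσ⟩ :=
    Finset.exists_mem_eq_sup Finset.univ ⟨τ₀, Finset.mem_univ _⟩ fun τ => v (M τ).det
  have hmax : ∀ τ, v (M τ).det ≤ v (M σ).det := fun τ => by
    rw [← hσ]; exact Finset.le_sup (f := fun τ => v (M τ).det) (Finset.mem_univ τ)
  set D := M σ with hD
  have hDdet : D.det ≠ 0 := by
    intro h
    have h4 := hmax τ₀
    rw [h, map_zero, le_zero_iff, Valuation.zero_iff] at h4
    exact hτ₀ h4
  have hDunit : IsUnit D.det := isUnit_iff_ne_zero.2 hDdet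
  set b : Fin d → (Fin n → K) := fun k => ∑ l, D⁻¹ k l • u l with hb
  have hdelta : ∀ k m, b k (σ m) = if k = m then 1 else 0 := by
    intro k m
    have h5 : b k (σ m) = ∑ l, D⁻¹ k l * D l m := by
      simp [hb, Finset.sum_apply]
      rfl
    rw [h5, ← Matrix.mul_apply, Matrix.nonsing_inv_mul D hDunit, Matrix.one_apply]
  have hbU : ∀ k, b k ∈ U := fun k => Submodule.sum_mem _ fun l _ => U.smul_mem _ (huU l)
  have hbO : ∀ k i, v (b k i) ≤ 1 := by
    intro k i
    have h1 : b k i = (D⁻¹ *ᵥ fun l => u l i) k := by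
      simp [hb, Finset.sum_apply, Matrix.mulVec, dotProduct]
    have h2 : b k i = Ring.inverse D.det * (D.updateCol k fun l => u l i).det := by
      rw [h1, Matrix.inv_def, Matrix.smul_mulVec, ← Matrix.cramer_eq_adjugate_mulVec,
        Pi.smul_apply, Matrix.cramer_apply, smul_eq_mul]
    have hupd : D.updateCol k (fun l => u l i) = M (Function.update σ k i) := by
      ext l m
      rw [Matrix.updateCol_apply]
      by_cases hm : m = k
      · simp [M, Function.update_apply, hm]
      · simp only [hm, if_false]
        show u l (σ m) = u l (Function.update σ k i m)
        rw [Function.update_apply, if_neg hm]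
    rw [h2, hupd, Ring.inverse_eq_inv', v.map_mul, map_inv₀]
    calc (v D.det)⁻¹ * v (M (Function.update σ k i)).det
        ≤ (v D.det)⁻¹ * v D.det := mul_le_mul_right (hmax _) _
      _ = 1 := inv_mul_cancel₀ (by simpa [Valuation.zero_iff] using hDdet)
  have hrepu : ∀ m, (∑ k, u m (σ k) • b k) = u m := by
    intro m
    have h1 : ∀ k, u m (σ k) = D m k := fun k => rfl
    calc ∑ k, u m (σ k) • b k = ∑ k, ∑ l, (D m k * D⁻¹ k l) • u l := by
          simp [hb, Finset.smul_sum, smul_smul, h1]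
      _ = ∑ l, (∑ k, D m k * D⁻¹ k l) • u l := by
          rw [Finset.sum_comm]
          simp [Finset.sum_smul]
      _ = ∑ l, ((D * D⁻¹) m l) • u l := by simp [Matrix.mul_apply]
      _ = u m := by
          rw [Matrix.mul_nonsing_inv D hDunit]
          simp [Matrix.one_apply, ite_smul]
  refine ⟨b, σ, hbU, ?_, hbO, hdelta⟩
  intro x hx
  rw [← hspan] at hx
  induction hx using Submodule.span_induction with
  | mem y hy =>
      obtain ⟨m, rfl⟩ := hy
      exact (hrepu m).symm
  | zero => simp
  | add y z _ _ hy hz =>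
      conv_lhs => rw [hy, hz]
      simp [add_smul, Finset.sum_add_distrib]
  | smul a y _ hy =>
      conv_lhs => rw [hy]
      simp [Finset.smul_sum, smul_smul]

end AuxBasis
section AuxSpan

variable {K : Type*} [Field K] {Γ : Type*} [LinearOrderedCommGroupWithZero Γ]
variable (v : Valuation K Γ) {n : ℕ}

lemma aux_resv_sum_smul {d : ℕ} (c : Fin d → K) (b : Fin d → (Fin n → K))
    (hc : ∀ k, v (c k) ≤ 1) (hbO : ∀ k i, v (b k i) ≤ 1) :
    resv v (∑ k, c k • b k) = ∑ k, res' v (c k) • resv v (b k) := by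
  funext i
  have h1 : (∑ k, c k • b k) i = ∑ k, c k * b k i := by
    simp [Finset.sum_apply]
  have h2 : (∑ k, res' v (c k) • resv v (b k)) i
      = ∑ k, res' v (c k) * res' v (b k i) := by
    simp [Finset.sum_apply, resv]
  rw [show resv v (∑ k, c k • b k) i = res' v ((∑ k, c k • b k) i) from rfl, h1, h2]
  exact aux_res'_sum_mul v c (fun k => b k i) hc (fun k => hbO k i)

lemma aux_resSet_eq_span (U : Submodule K (Fin n → K))
    (b : Fin (Module.finrank K ↥U) → (Fin n → K)) (σ : Fin (Module.finrank K ↥U) → Fin n)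
    (hbU : ∀ k, b k ∈ U) (hrep : ∀ x ∈ U, x = ∑ k, x (σ k) • b k)
    (hbO : ∀ k i, v (b k i) ≤ 1) :
    resSet v (U : Set (Fin n → K)) =
      (Submodule.span (Kbar v) (Set.range fun k => resv v (b k)) : Set (Fin n → Kbar v)) := by
  ext z
  constructor
  · rintro ⟨x₀, ⟨hxU, hxO⟩, rfl⟩
    have hx : x₀ = ∑ k, x₀ (σ k) • b k := hrep x₀ hxU
    have : resv v x₀ = ∑ k, res' v (x₀ (σ k)) • resv v (b k) := by
      conv_lhs => rw [hx]
      exact aux_resv_sum_smul v _ b (fun k => hxO (σ k)) hbO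
    rw [this]
    exact Submodule.sum_mem _ fun k _ =>
      Submodule.smul_mem _ _ (Submodule.subset_span ⟨k, rfl⟩)
  · intro hz
    obtain ⟨lam, hlam⟩ := (Submodule.mem_span_range_iff_exists_fun (Kbar v)).mp hz
    choose a ha using fun k => IsLocalRing.residue_surjective (R := v.valuationSubring) (lam k)
    refine ⟨∑ k, ((a k : K)) • b k, ⟨Submodule.sum_mem _ fun k _ => U.smul_mem _ (hbU k), ?_⟩, ?_⟩
    · intro i
      have h1 : (∑ k, ((a k : K)) • b k) i = ∑ k, (a k : K) * b k i := by
        simp [Finset.sum_apply]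
      rw [h1]
      refine v.map_sum_le fun k _ => ?_
      rw [v.map_mul]
      exact mul_le_one' (a k).2 (hbO k i)
    · rw [aux_resv_sum_smul v _ b (fun k => (a k).2) hbO, ← hlam]
      refine Finset.sum_congr rfl fun k _ => ?_
      rw [aux_res'_coe, ha]

end AuxSpan
section AuxIndep

variable {K : Type*} [Field K] {Γ : Type*} [LinearOrderedCommGroupWithZero Γ]
variable (v : Valuation K Γ) {n : ℕ}

lemma aux_res'_one : res' v (1 : K) = 1 := by
  rw [show res' v (1 : K) = IsLocalRing.residue v.valuationSubring ⟨1, le_of_eq v.map_one⟩ from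
    dif_pos _]
  exact map_one _

lemma aux_res'_zero : res' v (0 : K) = 0 := by
  rw [show res' v (0 : K) = IsLocalRing.residue v.valuationSubring ⟨0, by simp⟩ from
    dif_pos _]
  exact map_zero _

lemma aux_indep {d : ℕ} (b : Fin d → (Fin n → K)) (σ : Fin d → Fin n)
    (hdelta : ∀ k l, b k (σ l) = if k = l then 1 else 0) :
    LinearIndependent (Kbar v) fun k => resv v (b k) := by
  classical
  apply LinearIndependent.of_comp (LinearMap.funLeft (Kbar v) (Kbar v) σ)
  have h : (⇑(LinearMap.funLeft (Kbar v) (Kbar v) σ) ∘ fun k => resv v (b k))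
      = fun k => (Pi.single k 1 : Fin d → Kbar v) := by
    funext k l
    show res' v (b k (σ l)) = (Pi.single k 1 : Fin d → Kbar v) l
    rw [hdelta k l, Pi.single_apply]
    by_cases hkl : k = l
    · rw [if_pos hkl, if_pos hkl.symm]; exact aux_res'_one v
    · rw [if_neg hkl, if_neg (Ne.symm hkl)]; exact aux_res'_zero v
  rw [h]
  have h2 : (fun k => (Pi.single k 1 : Fin d → Kbar v)) = ⇑(Pi.basisFun (Kbar v) (Fin d)) := by
    funext k
    simp
  rw [h2]
  exact (Pi.basisFun (Kbar v) (Fin d)).linearIndependent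

end AuxIndep
/-- for subspaces `U, W ⊆ Kⁿ` of the same dimension,
`res U = res W` iff every `u ∈ U` has the same leading term as some `w ∈ W`. -/
theorem resSet_eq_iff_rv
    (v : Valuation K Γ) {n : ℕ}
    (U W : Submodule K (Fin n → K))
    (hdim : Module.finrank K U = Module.finrank K W) :
    resSet v (U : Set (Fin n → K)) = resSet v (W : Set (Fin n → K)) ↔
      ∀ u ∈ U, ∃ w ∈ W, rvEq v u w := by
  constructor
  · intro h u huU
    rcases eq_or_ne u 0 with rfl | hu0
    · exact ⟨0, W.zero_mem, Or.inr ⟨rfl, rfl⟩⟩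
    · have hvv : vv v u ≠ 0 := fun h0 => hu0 ((aux_vv_eq_zero_iff v).1 h0)
      have hne : Nonempty (Fin n) := by
        by_contra hn
        exact hu0 (funext fun i => absurd ⟨i⟩ hn)
      obtain ⟨i₀, -, hi₀⟩ := Finset.exists_mem_eq_sup (Finset.univ : Finset (Fin n))
        Finset.univ_nonempty fun i => v (u i)
      have hvvi : vv v u = v (u i₀) := hi₀
      have hui₀ : v (u i₀) ≠ 0 := by rw [← hvvi]; exact hvv
      have hui₀' : u i₀ ≠ 0 := fun h0 => hui₀ (by rw [h0, map_zero])
      have hcu : vv v ((u i₀)⁻¹ • u) = 1 := by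
        rw [aux_vv_smul, map_inv₀, hvvi, inv_mul_cancel₀ hui₀]
      have hOcu : ∀ i, v (((u i₀)⁻¹ • u) i) ≤ 1 := fun i => by
        rw [← hcu]; exact aux_coord_le_vv v _ i
      have hmem : resv v ((u i₀)⁻¹ • u) ∈ resSet v (U : Set (Fin n → K)) :=
        ⟨(u i₀)⁻¹ • u, ⟨U.smul_mem _ huU, hOcu⟩, rfl⟩
      rw [h] at hmem
      obtain ⟨w', ⟨hw'W, hw'O⟩, hres⟩ := hmem
      refine ⟨(u i₀) • w', W.smul_mem _ hw'W, Or.inl ?_⟩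
      have h1 : u - (u i₀) • w' = (u i₀) • ((u i₀)⁻¹ • u - w') := by
        rw [smul_sub, smul_inv_smul₀ hui₀']
      have h2 : vv v ((u i₀)⁻¹ • u - w') < 1 := by
        have hcoord : ∀ i, v (((u i₀)⁻¹ • u - w') i) < 1 := by
          intro i
          have h4 := (aux_resv_eq_iff v hw'O hOcu).1 hres i
          have h5 : (((u i₀)⁻¹ • u - w') i) = ((u i₀)⁻¹ • u) i - w' i := rfl
          rw [h5, v.map_sub_swap]
          exact h4
        have hb : (0 : Γ) < 1 := zero_lt_one
        exact (Finset.sup_lt_iff (lt_of_le_of_lt bot_le hb)).2 fun i _ => hcoord i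
      rw [h1, aux_vv_smul, hvvi]
      calc v (u i₀) * vv v ((u i₀)⁻¹ • u - w') < v (u i₀) * 1 :=
            mul_lt_mul_of_pos_left h2 (zero_lt_iff.2 hui₀)
        _ = v (u i₀) := mul_one _
  · intro H
    have hsub : resSet v (U : Set (Fin n → K)) ⊆ resSet v (W : Set (Fin n → K)) := by
      rintro z ⟨x₀, ⟨hxU, hxO⟩, rfl⟩
      rcases eq_or_ne x₀ 0 with rfl | hx0
      · exact ⟨0, ⟨W.zero_mem, fun i => by simp⟩, rfl⟩
      · obtain ⟨w, hwW, hrv⟩ := H x₀ hxU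
        rcases hrv with hlt | ⟨h0, -⟩
        · have hvx : vv v x₀ ≤ 1 := (aux_vv_le_iff v).2 hxO
          have hcoord : ∀ i, v (x₀ i - w i) < 1 := fun i => by
            have h1 : v (x₀ i - w i) ≤ vv v (x₀ - w) := by
              simpa using aux_coord_le_vv v (x₀ - w) i
            exact lt_of_le_of_lt h1 (lt_of_lt_of_le hlt hvx)
          have hwO : ∀ i, v (w i) ≤ 1 := fun i => by
            have h2 : w i = x₀ i - (x₀ i - w i) := by ring
            rw [h2]
            exact le_trans (v.map_sub _ _) (max_le (hxO i) (hcoord i).le)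
          exact ⟨w, ⟨hwW, hwO⟩, (aux_resv_eq_iff v hwO hxO).2 fun i => by
            rw [v.map_sub_swap]; exact hcoord i⟩
        · exact absurd h0 hx0
    obtain ⟨bU, σU, hbUU, hrepU, hbUO, hdU⟩ := aux_exists_good_basis v U
    obtain ⟨bW, σW, hbWW, hrepW, hbWO, hdW⟩ := aux_exists_good_basis v W
    have hU := aux_resSet_eq_span v U bU σU hbUU hrepU hbUO
    have hW := aux_resSet_eq_span v W bW σW hbWW hrepW hbWO
    have hle : Submodule.span (Kbar v) (Set.range fun k => resv v (bU k)) ≤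
        Submodule.span (Kbar v) (Set.range fun k => resv v (bW k)) := by
      rw [← SetLike.coe_subset_coe, ← hU, ← hW]
      exact hsub
    have hindU := aux_indep v bU σU hdU
    have hindW := aux_indep v bW σW hdW
    have h1 : Module.finrank (Kbar v)
        (Submodule.span (Kbar v) (Set.range fun k => resv v (bU k))) = Module.finrank K U := by
      rw [finrank_span_eq_card hindU, Fintype.card_fin]
    have h2 : Module.finrank (Kbar v)
        (Submodule.span (Kbar v) (Set.range fun k => resv v (bW k))) = Module.finrank K W := by
      rw [finrank_span_eq_card hindW, Fintype.card_fin]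
    have heq := Submodule.eq_of_le_of_finrank_eq hle (by rw [h1, h2, hdim])
    rw [hU, hW, heq]

end
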